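/- Let G be a non-collinear visibility graph. Then the edge-connectivity of G equals its minimum degree. Moreover, for any two distinct vertices v and w of G, there exist min{deg(v), deg(w)} pairwise edge-disjoint paths between v and w in G, each of length at most 4. -/

import Mathlib

/-- Two distinct points of the plane are visible with respect to a finite point set `P`
if no point of `P` lies in the open line segment between them. -/
def VisAdj (P : Finset (ℝ × ℝ)) (x y : ℝ × ℝ) : Prop :=
  x ≠ y ∧ ∀ p ∈ P, p ∉ openSegment ℝ x y

/-- The visibility graph of a finite point set `P` in the plane: vertices are the points
of `P`, two distinct points being adjacent iff the open segment between them contains no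
point of `P`. -/
def visibilityGraph (P : Finset (ℝ × ℝ)) : SimpleGraph {p : ℝ × ℝ // p ∈ P} where
  Adj u v := VisAdj P u.1 v.1
  symm := ⟨by
    rintro u v ⟨hne, h⟩
    refine ⟨hne.symm, fun p hp => ?_⟩
    rw [openSegment_symm]
    exact h p hp⟩
  loopless := ⟨by rintro u ⟨hne, -⟩; exact hne rfl⟩

/-- The minimum degree of a graph: the least number of neighbours of a vertex
(degree measured by `Nat.card` of the neighbour set). -/
noncomputable def minDegree' {V : Type*} (G : SimpleGraph V) : ℕ :=
  sInf {d | ∃ v : V, d = Nat.card (G.neighborSet v)}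

/-- The edge-connectivity of a graph: the least size of a set of edges whose removal
disconnects the graph. -/
noncomputable def edgeConn {V : Type*} (G : SimpleGraph V) : ℕ :=
  sInf {k | ∃ F : Set (Sym2 V), F ⊆ G.edgeSet ∧ Nat.card F = k ∧
    ¬ (G.deleteEdges F).Connected}

/-- Let `G` be a non-collinear visibility graph. Then the edge-connectivity of `G` equals
its minimum degree; moreover for any two distinct vertices `v, w` there exist
`min (deg v) (deg w)` pairwise edge-disjoint paths between `v` and `w`, each of length
at most 4. -/


private def gfun (a b p : ℝ × ℝ) : ℝ :=
  (p.1 - a.1) * (b.2 - a.2) - (p.2 - a.2) * (b.1 - a.1)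

private lemma collinear_of_gfun {P : Finset (ℝ × ℝ)} {a b : ℝ × ℝ} (ha : a ∈ P)
    (hab : a ≠ b) (h : ∀ p ∈ P, gfun a b p = 0) : Collinear ℝ (P : Set (ℝ × ℝ)) := by
  rw [collinear_iff_of_mem (show a ∈ (P : Set (ℝ × ℝ)) from ha)]
  refine ⟨b - a, fun p hp => ?_⟩
  have hg := h p hp
  simp only [gfun] at hg
  by_cases h1 : b.1 - a.1 ≠ 0
  · refine ⟨(p.1 - a.1) / (b.1 - a.1), ?_⟩
    ext
    · simp only [Prod.fst_add, Prod.smul_fst, Prod.fst_sub, smul_eq_mul, Prod.fst_vadd, vadd_eq_add]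
      field_simp
      ring
    · simp only [Prod.snd_add, Prod.smul_snd, Prod.snd_sub, smul_eq_mul, Prod.snd_vadd, vadd_eq_add]
      field_simp
      nlinarith [hg]
  · push_neg at h1
    have h2 : b.2 - a.2 ≠ 0 := by
      intro h2
      apply hab
      have e1 : b.1 = a.1 := by linarith
      have e2 : b.2 = a.2 := by linarith
      ext <;> simp [e1, e2]
    have h3 : p.1 - a.1 = 0 := by
      have hz : (p.1 - a.1) * (b.2 - a.2) = 0 := by rw [h1] at hg; linarith
      rcases mul_eq_zero.1 hz with h | h
      · exact h
      · exact absurd h h2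
    refine ⟨(p.2 - a.2) / (b.2 - a.2), ?_⟩
    ext
    · simp only [Prod.fst_add, Prod.smul_fst, Prod.fst_sub, smul_eq_mul, Prod.fst_vadd, vadd_eq_add]
      rw [h1]
      simp only [mul_zero]
      linarith
    · simp only [Prod.snd_add, Prod.smul_snd, Prod.snd_sub, smul_eq_mul, Prod.snd_vadd, vadd_eq_add]
      field_simp
      ring

private lemma gfun_segment {a b c p : ℝ × ℝ} {x : ℝ × ℝ} (hx : gfun a b x = 0)
    (hp : p ∈ openSegment ℝ c x) : ∃ u : ℝ, 0 < u ∧ u < 1 ∧ gfun a b p = u * gfun a b c := by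
  rw [openSegment_eq_image] at hp
  obtain ⟨t, ⟨ht0, ht1⟩, rfl⟩ := hp
  refine ⟨1 - t, by linarith, by linarith, ?_⟩
  simp only [gfun, Prod.fst_add, Prod.snd_add, Prod.smul_fst, Prod.smul_snd, smul_eq_mul,
    Prod.fst_sub, Prod.snd_sub] at *
  nlinarith [hx]

/-- Any two distinct points of a non-collinear finite point set have a common
visible neighbour (off their line). -/
private lemma common_neighbor {P : Finset (ℝ × ℝ)} (hP : ¬ Collinear ℝ (P : Set (ℝ × ℝ)))
    {a b : ℝ × ℝ} (ha : a ∈ P) (hb : b ∈ P) (hab : a ≠ b) :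
    ∃ c ∈ P, VisAdj P c a ∧ VisAdj P c b := by
  classical
  set S := P.filter (fun p => gfun a b p ≠ 0) with hS
  have hSne : S.Nonempty := by
    by_contra hemp
    rw [Finset.not_nonempty_iff_eq_empty] at hemp
    refine hP (collinear_of_gfun ha hab fun p hp => ?_)
    by_contra hg
    have : p ∈ S := Finset.mem_filter.2 ⟨hp, hg⟩
    simp [hemp] at this
  obtain ⟨c, hcS, hcmin⟩ := Finset.exists_min_image S (fun p => |gfun a b p|) hSne
  obtain ⟨hcP, hgc⟩ := Finset.mem_filter.1 hcS
  have hga : gfun a b a = 0 := by simp [gfun]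
  have hgb : gfun a b b = 0 := by simp [gfun]; ring
  have key : ∀ x : ℝ × ℝ, gfun a b x = 0 → x ∈ P → c ≠ x ∧ ∀ p ∈ P, p ∉ openSegment ℝ c x := by
    intro x hx hxP
    constructor
    · rintro rfl; exact hgc hx
    · intro p hpP hpseg
      obtain ⟨u, hu0, hu1, hup⟩ := gfun_segment hx hpseg
      have hpne : gfun a b p ≠ 0 := by
        rw [hup]; exact mul_ne_zero (by linarith) hgc
      have hpS : p ∈ S := Finset.mem_filter.2 ⟨hpP, hpne⟩
      have := hcmin p hpS
      rw [hup, abs_mul, abs_of_pos hu0] at this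
      nlinarith [abs_pos.2 hgc]
  obtain ⟨h1, h2⟩ := key a hga ha
  obtain ⟨h3, h4⟩ := key b hgb hb
  exact ⟨c, hcP, ⟨h1, h2⟩, ⟨h3, h4⟩⟩

open SimpleGraph in

set_option maxHeartbeats 1600000 in
private theorem abstract_paths {V : Type*} [Fintype V] (G : SimpleGraph V)
    (hcn : ∀ a b : V, a ≠ b → ∃ c, G.Adj c a ∧ G.Adj c b)
    (v w : V) (hvw : v ≠ w) :
    ∃ f : Fin (min (Nat.card (G.neighborSet v)) (Nat.card (G.neighborSet w))) → G.Walk v w,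
      (∀ i, (f i).IsPath ∧ (f i).length ≤ 4) ∧
      ∀ i j, i ≠ j → List.Disjoint (f i).edges (f j).edges := by
  classical
  set n := min (Nat.card (G.neighborSet v)) (Nat.card (G.neighborSet w)) with hn
  rcases Nat.eq_zero_or_pos n with h0 | hpos
  · exact ⟨fun i => absurd i.isLt (by omega), fun i => absurd i.isLt (by omega),
      fun i j _ => absurd i.isLt (by omega)⟩
  have hNvfin := Set.toFinite (G.neighborSet v)
  have hNwfin := Set.toFinite (G.neighborSet w)
  set Nv := hNvfin.toFinset with hNvdef
  set Nw := hNwfin.toFinset with hNwdef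
  have hmemNv : ∀ x, x ∈ Nv ↔ G.Adj v x := fun x => by
    rw [hNvdef, Set.Finite.mem_toFinset, SimpleGraph.mem_neighborSet]
  have hmemNw : ∀ x, x ∈ Nw ↔ G.Adj w x := fun x => by
    rw [hNwdef, Set.Finite.mem_toFinset, SimpleGraph.mem_neighborSet]
  have hNvcard : Nat.card (G.neighborSet v) = Nv.card := by
    rw [Nat.card_coe_set_eq, Set.ncard_eq_toFinset_card _ hNvfin]
  have hNwcard : Nat.card (G.neighborSet w) = Nw.card := by
    rw [Nat.card_coe_set_eq, Set.ncard_eq_toFinset_card _ hNwfin]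
  set t := if G.Adj v w then 1 else 0 with ht
  have ht1 : t ≤ 1 := by rw [ht]; split <;> omega
  have htn : t ≤ n := le_trans ht1 hpos
  set C := Nv ∩ Nw with hCdef
  set A' := Nv \ insert w Nw with hA'def
  set B' := Nw \ insert v Nv with hB'def
  -- cardinality identities
  have gensplit : ∀ (N1 N2 : Finset V) (u1 u2 : V), (∀ x, x ∈ N1 ↔ G.Adj u1 x) →
      (∀ x, x ∈ N2 ↔ G.Adj u2 x) → G.Adj u1 u2 →
      N1.card = (N1 ∩ N2).card + (N1 \ insert u2 N2).card + 1 := by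
    intro N1 N2 u1 u2 hm1 hm2 hadj
    have key : N1 \ insert u2 N2 = (N1 \ N2).erase u2 := by
      ext x
      simp only [Finset.mem_sdiff, Finset.mem_erase, Finset.mem_insert, not_or]
      tauto
    have hbase := Finset.card_inter_add_card_sdiff N1 N2
    have hw : u2 ∈ N1 \ N2 := Finset.mem_sdiff.2 ⟨(hm1 u2).2 hadj,
      fun h => G.irrefl ((hm2 u2).1 h)⟩
    rw [key, Finset.card_erase_of_mem hw]
    have hpos1 : 1 ≤ (N1 \ N2).card := Finset.card_pos.2 ⟨u2, hw⟩
    omega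
  have gensplit' : ∀ (N1 N2 : Finset V) (u1 u2 : V), (∀ x, x ∈ N1 ↔ G.Adj u1 x) →
      (∀ x, x ∈ N2 ↔ G.Adj u2 x) → ¬ G.Adj u1 u2 →
      N1.card = (N1 ∩ N2).card + (N1 \ insert u2 N2).card := by
    intro N1 N2 u1 u2 hm1 hm2 hadj
    have key : N1 \ insert u2 N2 = (N1 \ N2).erase u2 := by
      ext x
      simp only [Finset.mem_sdiff, Finset.mem_erase, Finset.mem_insert, not_or]
      tauto
    have hbase := Finset.card_inter_add_card_sdiff N1 N2
    have hw : u2 ∉ N1 \ N2 := fun h => hadj ((hm1 u2).1 (Finset.mem_sdiff.1 h).1)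
    rw [key, Finset.erase_eq_of_notMem hw]
    omega
  have hNvsplit : Nv.card = C.card + A'.card + t := by
    by_cases hadj : G.Adj v w
    · rw [ht, if_pos hadj, hCdef, hA'def]
      exact gensplit Nv Nw v w hmemNv hmemNw hadj
    · rw [ht, if_neg hadj, hCdef, hA'def, Nat.add_zero]
      exact gensplit' Nv Nw v w hmemNv hmemNw hadj
  have hNwsplit : Nw.card = C.card + B'.card + t := by
    have hCcomm : C = Nw ∩ Nv := by rw [hCdef, Finset.inter_comm]
    by_cases hadj : G.Adj v w
    · rw [ht, if_pos hadj, hCcomm, hB'def]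
      exact gensplit Nw Nv w v hmemNw hmemNv hadj.symm
    · rw [ht, if_neg hadj, hCcomm, hB'def, Nat.add_zero]
      exact gensplit' Nw Nv w v hmemNw hmemNv (fun h => hadj h.symm)
  have hnNv : n ≤ Nv.card := hNvcard ▸ (hn ▸ min_le_left _ _)
  have hnNw : n ≤ Nw.card := hNwcard ▸ (hn ▸ min_le_right _ _)
  set k := min C.card (n - t) with hk
  set m := n - t - k with hm
  have hkm : t + (k + m) = n := by omega
  have hmA : m ≤ A'.card := by omega
  have hmB : m ≤ B'.card := by omega
  have hkC : k ≤ C.card := by rw [hk]; exact min_le_left _ _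
  obtain ⟨C0, hC0sub, hC0card⟩ := Finset.exists_subset_card_eq hkC
  obtain ⟨A0, hA0sub, hA0card⟩ := Finset.exists_subset_card_eq hmA
  obtain ⟨B0, hB0sub, hB0card⟩ := Finset.exists_subset_card_eq hmB
  set ex : Fin k → V := fun i => (C0.equivFin.symm (Fin.cast hC0card.symm i) : C0).1 with hexdef
  set af : Fin m → V := fun i => (A0.equivFin.symm (Fin.cast hA0card.symm i) : A0).1 with hafdef
  set bef : Fin m → V := fun i => (B0.equivFin.symm (Fin.cast hB0card.symm i) : B0).1 with hbefdef
  have hex_inj : Function.Injective ex := by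
    intro i j hij
    have h2 := C0.equivFin.symm.injective (Subtype.ext hij)
    exact Fin.ext (by simpa using congrArg Fin.val h2)
  have haf_inj : Function.Injective af := by
    intro i j hij
    have h2 := A0.equivFin.symm.injective (Subtype.ext hij)
    exact Fin.ext (by simpa using congrArg Fin.val h2)
  have hbef_inj : Function.Injective bef := by
    intro i j hij
    have h2 := B0.equivFin.symm.injective (Subtype.ext hij)
    exact Fin.ext (by simpa using congrArg Fin.val h2)
  have hex_mem : ∀ i, ex i ∈ C := fun i => hC0sub (C0.equivFin.symm _).2
  have haf_mem : ∀ i, af i ∈ A' := fun i => hA0sub (A0.equivFin.symm _).2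
  have hbef_mem : ∀ i, bef i ∈ B' := fun i => hB0sub (B0.equivFin.symm _).2
  -- choose a pairing maximizing the number of adjacent pairs
  set score : Equiv.Perm (Fin m) → ℕ :=
    fun π => ∑ i, if G.Adj (af i) (bef (π i)) then 1 else 0 with hscore
  obtain ⟨π, -, hπmax⟩ := Finset.exists_max_image Finset.univ score ⟨1, Finset.mem_univ 1⟩
  set bf : Fin m → V := fun i => bef (π i) with hbfdef
  have hbf_inj : Function.Injective bf := hbef_inj.comp π.injective
  have hbf_mem : ∀ i, bf i ∈ B' := fun i => hbef_mem (π i)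
  -- basic adjacency / distinctness facts
  have haNv : ∀ i, G.Adj v (af i) := fun i =>
    (hmemNv _).1 (Finset.mem_sdiff.1 (haf_mem i)).1
  have haNw : ∀ i, ¬ G.Adj w (af i) := fun i h =>
    (Finset.mem_sdiff.1 (haf_mem i)).2 (Finset.mem_insert.2 (Or.inr ((hmemNw _).2 h)))
  have haw : ∀ i, af i ≠ w := fun i h =>
    (Finset.mem_sdiff.1 (haf_mem i)).2 (Finset.mem_insert.2 (Or.inl h))
  have hav : ∀ i, af i ≠ v := fun i => (haNv i).ne'
  have hbNw : ∀ i, G.Adj w (bf i) := fun i =>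
    (hmemNw _).1 (Finset.mem_sdiff.1 (hbf_mem i)).1
  have hbNv : ∀ i, ¬ G.Adj v (bf i) := fun i h =>
    (Finset.mem_sdiff.1 (hbf_mem i)).2 (Finset.mem_insert.2 (Or.inr ((hmemNv _).2 h)))
  have hbv : ∀ i, bf i ≠ v := fun i h =>
    (Finset.mem_sdiff.1 (hbf_mem i)).2 (Finset.mem_insert.2 (Or.inl h))
  have hbw : ∀ i, bf i ≠ w := fun i => (hbNw i).ne'
  have hxNv : ∀ i, G.Adj v (ex i) := fun i =>
    (hmemNv _).1 (Finset.mem_inter.1 (hex_mem i)).1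
  have hxNw : ∀ i, G.Adj w (ex i) := fun i =>
    (hmemNw _).1 (Finset.mem_inter.1 (hex_mem i)).2
  have hxv : ∀ i, ex i ≠ v := fun i => (hxNv i).ne'
  have hxw : ∀ i, ex i ≠ w := fun i => (hxNw i).ne'
  have hab : ∀ i j, af i ≠ bf j := fun i j h => haNw i (h ▸ hbNw j)
  have hax : ∀ i j, af i ≠ ex j := fun i j h => haNw i (h ▸ hxNw j)
  have hbx : ∀ i j, bf i ≠ ex j := fun i j h => hbNv i (h ▸ hxNv j)
  -- maximality: no cross adjacency between two non-adjacent pairs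
  have hmax : ∀ i j : Fin m, i ≠ j → ¬G.Adj (af i) (bf i) → ¬G.Adj (af j) (bf j) →
      ¬G.Adj (af i) (bf j) := by
    intro i j hij hi hj hadj
    have hle := hπmax (π * Equiv.swap i j) (Finset.mem_univ _)
    set g : Fin m → ℕ := fun x => if G.Adj (af x) (bef (π x)) then 1 else 0 with hg
    set g' : Fin m → ℕ := fun x => if G.Adj (af x) (bef ((π * Equiv.swap i j) x)) then 1 else 0
      with hg'
    have hgg' : ∀ x, x ≠ i → x ≠ j → g' x = g x := by
      intro x hxi hxj
      simp only [hg, hg', Equiv.Perm.mul_apply, Equiv.swap_apply_of_ne_of_ne hxi hxj]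
    have hji : j ≠ i := hij.symm
    have hjmem : j ∈ Finset.univ.erase i := Finset.mem_erase.2 ⟨hji, Finset.mem_univ j⟩
    have hgi : g i = 0 := by simp only [hg]; rw [if_neg hi]
    have hgj : g j = 0 := by simp only [hg]; rw [if_neg hj]
    have hgi' : g' i = 1 := by
      simp only [hg', Equiv.Perm.mul_apply, Equiv.swap_apply_left]
      rw [if_pos hadj]
    have e1 : score π = ∑ x ∈ (Finset.univ.erase i).erase j, g x := by
      show (∑ x ∈ Finset.univ, g x) = _
      rw [Finset.sum_erase _ hgj, Finset.sum_erase _ hgi]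
    have e2 : score (π * Equiv.swap i j) =
        g' i + (g' j + ∑ x ∈ (Finset.univ.erase i).erase j, g' x) := by
      show (∑ x ∈ Finset.univ, g' x) = _
      rw [← Finset.add_sum_erase _ g' (Finset.mem_univ i), ← Finset.add_sum_erase _ g' hjmem]
    have e3 : ∑ x ∈ (Finset.univ.erase i).erase j, g' x
        = ∑ x ∈ (Finset.univ.erase i).erase j, g x := by
      refine Finset.sum_congr rfl fun x hx => ?_
      have hx' := Finset.mem_erase.1 hx
      have hx'' := Finset.mem_erase.1 hx'.2
      exact hgg' x hx''.1 hx'.1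
    rw [e2, e3, hgi'] at hle
    rw [e1] at hle
    omega
  -- choose middle vertices for the non-adjacent pairs
  have hached : ∀ i : Fin m, ∃ ci, ¬G.Adj (af i) (bf i) →
      G.Adj ci (af i) ∧ G.Adj ci (bf i) := by
    intro i
    by_cases h : G.Adj (af i) (bf i)
    · exact ⟨v, fun h' => absurd h h'⟩
    · obtain ⟨c, hc1, hc2⟩ := hcn (af i) (bf i) (hab i i)
      exact ⟨c, fun _ => ⟨hc1, hc2⟩⟩
  choose cf hcf using hached
  have hcv : ∀ i (hni : ¬G.Adj (af i) (bf i)), cf i ≠ v := by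
    intro i hni h
    exact hbNv i (h ▸ (hcf i hni).2)
  have hcw : ∀ i (hni : ¬G.Adj (af i) (bf i)), cf i ≠ w := by
    intro i hni h
    exact haNw i (h ▸ (hcf i hni).1)
  have hca : ∀ i (hni : ¬G.Adj (af i) (bf i)), cf i ≠ af i := fun i hni => ((hcf i hni).1).ne
  have hcb : ∀ i (hni : ¬G.Adj (af i) (bf i)), cf i ≠ bf i := fun i hni => ((hcf i hni).2).ne
  -- construct the walks
  have hadj_t : ∀ _ : Fin t, G.Adj v w := by
    intro i
    by_cases h : G.Adj v w
    · exact h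
    · exfalso
      have hi := i.isLt
      have ht0 : t = 0 := by rw [ht, if_neg h]
      omega
  set F1 : Fin t → G.Walk v w := fun i => SimpleGraph.Walk.cons (hadj_t i) SimpleGraph.Walk.nil
    with hF1
  set F2 : Fin k → G.Walk v w := fun i =>
    SimpleGraph.Walk.cons (hxNv i) (SimpleGraph.Walk.cons ((hxNw i).symm) SimpleGraph.Walk.nil)
    with hF2
  set F3 : Fin m → G.Walk v w := fun i =>
    if h : G.Adj (af i) (bf i) then
      SimpleGraph.Walk.cons (haNv i) (SimpleGraph.Walk.cons h
        (SimpleGraph.Walk.cons ((hbNw i).symm) SimpleGraph.Walk.nil))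
    else
      SimpleGraph.Walk.cons (haNv i) (SimpleGraph.Walk.cons ((hcf i h).1.symm)
        (SimpleGraph.Walk.cons ((hcf i h).2)
          (SimpleGraph.Walk.cons ((hbNw i).symm) SimpleGraph.Walk.nil))) with hF3
  have hF1edges : ∀ i, (F1 i).edges = [s(v,w)] := fun i => by simp [hF1]
  have hF2edges : ∀ i, (F2 i).edges = [s(v, ex i), s(ex i, w)] := fun i => by simp [hF2]
  have hF3edgesA : ∀ i (h : G.Adj (af i) (bf i)),
      (F3 i).edges = [s(v, af i), s(af i, bf i), s(bf i, w)] := fun i h => by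
    simp only [hF3]; rw [dif_pos h]; simp
  have hF3edgesB : ∀ i (h : ¬ G.Adj (af i) (bf i)),
      (F3 i).edges = [s(v, af i), s(af i, cf i), s(cf i, bf i), s(bf i, w)] := fun i h => by
    simp only [hF3]; rw [dif_neg h]; simp
  have hgood : ∀ s, ((Sum.elim F1 (Sum.elim F2 F3)) s).IsPath ∧
      ((Sum.elim F1 (Sum.elim F2 F3)) s).length ≤ 4 := by
    rintro (a | a | a)
    · constructor
      · simp [hF1, SimpleGraph.Walk.isPath_def, hvw]
      · simp [hF1]
    · constructor
      · have h1 := (hxv a).symm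
        have h2 := hxw a
        simp [hF2, SimpleGraph.Walk.isPath_def, hvw, h1, h2, Ne.symm h2]
      · simp [hF2]
    · by_cases h : G.Adj (af a) (bf a)
      · constructor
        · have h1 := (hav a).symm
          have h2 := (hbv a).symm
          have h3 := hab a a
          have h4 := haw a
          have h5 := hbw a
          simp only [Sum.elim_inr, hF3]
          rw [dif_pos h]
          simp [SimpleGraph.Walk.isPath_def, hvw, h1, h2, h3, h4, h5, Ne.symm h3]
        · simp only [Sum.elim_inr, hF3]; rw [dif_pos h]; simp
      · constructor
        · have h1 := (hav a).symm
          have h2 := (hbv a).symm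
          have h3 := hab a a
          have h4 := haw a
          have h5 := hbw a
          have h6 := (hcv a h).symm
          have h7 := hcw a h
          have h8 := hca a h
          have h9 := hcb a h
          simp only [Sum.elim_inr, hF3]
          rw [dif_neg h]
          simp [SimpleGraph.Walk.isPath_def, hvw, h1, h2, h3, h4, h5, h6, h7, h8, h9,
            Ne.symm h3, Ne.symm h8, Ne.symm h9]
        · simp only [Sum.elim_inr, hF3]; rw [dif_neg h]; simp
  clear_value F3 F2 F1 bf score af bef ex t k m C A' B' Nv Nw
  clear hπmax hscore gensplit gensplit' hNvsplit hNwsplit hmemNv hmemNw hNvcard hNwcard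
  clear hexdef hafdef hbefdef hbfdef hF1 hF2 hF3 hCdef hA'def hB'def hNvdef hNwdef
  clear hC0sub hA0sub hB0sub hC0card hA0card hB0card hex_mem haf_mem hbef_mem hbf_mem
  clear hnNv hnNw hmA hmB ht hk hm hkC
  have hdisj : ∀ s s', s ≠ s' → List.Disjoint ((Sum.elim F1 (Sum.elim F2 F3)) s).edges
      ((Sum.elim F1 (Sum.elim F2 F3)) s').edges := by
    rintro (a | a | a) (b | b | b) hss
    · exact (hss (congrArg Sum.inl (Fin.ext (by have h1 := a.isLt; have h2 := b.isLt; omega)))).elim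
    · simp only [Sum.elim_inl, Sum.elim_inr]
      rw [hF1edges a, hF2edges b]
      have n1 := hxv b; have n2 := hxw b; have n1' := n1.symm; have n2' := n2.symm
      simp only [List.disjoint_cons_left, List.disjoint_cons_right, List.mem_cons,
        List.not_mem_nil, or_false, List.disjoint_nil_left, List.mem_singleton, Sym2.eq_iff]
      tauto
    · simp only [Sum.elim_inl, Sum.elim_inr]
      rw [hF1edges a]
      have n1 := hav b; have n2 := haw b; have n3 := hbv b; have n4 := hbw b
      have n1' := n1.symm; have n2' := n2.symm; have n3' := n3.symm; have n4' := n4.symm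
      by_cases h : G.Adj (af b) (bf b)
      · rw [hF3edgesA b h]
        simp only [List.disjoint_cons_left, List.disjoint_cons_right, List.mem_cons,
          List.not_mem_nil, or_false, List.disjoint_nil_left, List.mem_singleton, Sym2.eq_iff]
        tauto
      · rw [hF3edgesB b h]
        have n5 := hcv b h; have n6 := hcw b h; have n5' := n5.symm; have n6' := n6.symm
        simp only [List.disjoint_cons_left, List.disjoint_cons_right, List.mem_cons,
          List.not_mem_nil, or_false, List.disjoint_nil_left, List.mem_singleton, Sym2.eq_iff]
        tauto
    · simp only [Sum.elim_inl, Sum.elim_inr]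
      rw [hF1edges b, hF2edges a]
      have n1 := hxv a; have n2 := hxw a; have n1' := n1.symm; have n2' := n2.symm
      simp only [List.disjoint_cons_left, List.disjoint_cons_right, List.mem_cons,
        List.not_mem_nil, or_false, List.disjoint_nil_left, List.mem_singleton, Sym2.eq_iff]
      tauto
    · simp only [Sum.elim_inl, Sum.elim_inr]
      rw [hF2edges a, hF2edges b]
      have hne : a ≠ b := fun h => hss (by rw [h])
      have n0 : ex a ≠ ex b := fun h => hne (hex_inj h)
      have n1 := hxv a; have n2 := hxw a; have n3 := hxv b; have n4 := hxw b
      have n0' := n0.symm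
      have n1' := n1.symm; have n2' := n2.symm; have n3' := n3.symm; have n4' := n4.symm
      simp only [List.disjoint_cons_left, List.disjoint_cons_right, List.mem_cons,
        List.not_mem_nil, or_false, List.disjoint_nil_left, List.mem_singleton, Sym2.eq_iff]
      tauto
    · simp only [Sum.elim_inl, Sum.elim_inr]
      rw [hF2edges a]
      have n1 := hxv a; have n2 := hxw a; have n1' := n1.symm; have n2' := n2.symm
      have n3 := hav b; have n4 := haw b; have n5 := hbv b; have n6 := hbw b
      have n3' := n3.symm; have n4' := n4.symm; have n5' := n5.symm; have n6' := n6.symm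
      have n7 := hax b a; have n8 := hbx b a; have n7' := n7.symm; have n8' := n8.symm
      by_cases h : G.Adj (af b) (bf b)
      · rw [hF3edgesA b h]
        simp only [List.disjoint_cons_left, List.disjoint_cons_right, List.mem_cons,
          List.not_mem_nil, or_false, List.disjoint_nil_left, List.mem_singleton, Sym2.eq_iff]
        tauto
      · rw [hF3edgesB b h]
        have n9 := hcv b h; have n10 := hcw b h; have n9' := n9.symm; have n10' := n10.symm
        simp only [List.disjoint_cons_left, List.disjoint_cons_right, List.mem_cons,
          List.not_mem_nil, or_false, List.disjoint_nil_left, List.mem_singleton, Sym2.eq_iff]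
        tauto
    · simp only [Sum.elim_inl, Sum.elim_inr]
      rw [hF1edges b]
      have n1 := hav a; have n2 := haw a; have n3 := hbv a; have n4 := hbw a
      have n1' := n1.symm; have n2' := n2.symm; have n3' := n3.symm; have n4' := n4.symm
      by_cases h : G.Adj (af a) (bf a)
      · rw [hF3edgesA a h]
        simp only [List.disjoint_cons_left, List.disjoint_cons_right, List.mem_cons,
          List.not_mem_nil, or_false, List.disjoint_nil_left, List.mem_singleton, Sym2.eq_iff]
        tauto
      · rw [hF3edgesB a h]
        have n5 := hcv a h; have n6 := hcw a h; have n5' := n5.symm; have n6' := n6.symm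
        simp only [List.disjoint_cons_left, List.disjoint_cons_right, List.mem_cons,
          List.not_mem_nil, or_false, List.disjoint_nil_left, List.mem_singleton, Sym2.eq_iff]
        tauto
    · simp only [Sum.elim_inl, Sum.elim_inr]
      rw [hF2edges b]
      have n1 := hxv b; have n2 := hxw b; have n1' := n1.symm; have n2' := n2.symm
      have n3 := hav a; have n4 := haw a; have n5 := hbv a; have n6 := hbw a
      have n3' := n3.symm; have n4' := n4.symm; have n5' := n5.symm; have n6' := n6.symm
      have n7 := hax a b; have n8 := hbx a b; have n7' := n7.symm; have n8' := n8.symm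
      by_cases h : G.Adj (af a) (bf a)
      · rw [hF3edgesA a h]
        simp only [List.disjoint_cons_left, List.disjoint_cons_right, List.mem_cons,
          List.not_mem_nil, or_false, List.disjoint_nil_left, List.mem_singleton, Sym2.eq_iff]
        tauto
      · rw [hF3edgesB a h]
        have n9 := hcv a h; have n10 := hcw a h; have n9' := n9.symm; have n10' := n10.symm
        simp only [List.disjoint_cons_left, List.disjoint_cons_right, List.mem_cons,
          List.not_mem_nil, or_false, List.disjoint_nil_left, List.mem_singleton, Sym2.eq_iff]
        tauto
    · simp only [Sum.elim_inl, Sum.elim_inr]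
      have hne : a ≠ b := fun h => hss (by rw [h])
      have hne' : b ≠ a := hne.symm
      have m1 : af a ≠ af b := fun h => hne (haf_inj h)
      have m2 : bf a ≠ bf b := fun h => hne (hbf_inj h)
      have m1' := m1.symm; have m2' := m2.symm
      have n1 := hav a; have n2 := haw a; have n3 := hbv a; have n4 := hbw a
      have n1' := n1.symm; have n2' := n2.symm; have n3' := n3.symm; have n4' := n4.symm
      have p1 := hav b; have p2 := haw b; have p3 := hbv b; have p4 := hbw b
      have p1' := p1.symm; have p2' := p2.symm; have p3' := p3.symm; have p4' := p4.symm
      have q1 := hab a a; have q2 := hab a b; have q3 := hab b a; have q4 := hab b b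
      have q1' := q1.symm; have q2' := q2.symm; have q3' := q3.symm; have q4' := q4.symm
      by_cases h : G.Adj (af a) (bf a) <;> by_cases h' : G.Adj (af b) (bf b)
      · rw [hF3edgesA a h, hF3edgesA b h']
        simp only [List.disjoint_cons_left, List.disjoint_cons_right, List.mem_cons,
          List.not_mem_nil, or_false, List.disjoint_nil_left, List.mem_singleton, Sym2.eq_iff]
        tauto
      · rw [hF3edgesA a h, hF3edgesB b h']
        have r1 := hcv b h'; have r2 := hcw b h'
        have r1' := r1.symm; have r2' := r2.symm
        simp only [List.disjoint_cons_left, List.disjoint_cons_right, List.mem_cons,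
          List.not_mem_nil, or_false, List.disjoint_nil_left, List.mem_singleton, Sym2.eq_iff]
        tauto
      · rw [hF3edgesB a h, hF3edgesA b h']
        have r1 := hcv a h; have r2 := hcw a h
        have r1' := r1.symm; have r2' := r2.symm
        simp only [List.disjoint_cons_left, List.disjoint_cons_right, List.mem_cons,
          List.not_mem_nil, or_false, List.disjoint_nil_left, List.mem_singleton, Sym2.eq_iff]
        tauto
      · rw [hF3edgesB a h, hF3edgesB b h']
        have r1 := hcv a h; have r2 := hcw a h; have r3 := hcv b h'; have r4 := hcw b h'
        have r1' := r1.symm; have r2' := r2.symm; have r3' := r3.symm; have r4' := r4.symm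
        have c1 : cf a ≠ af b := fun hh => hmax b a hne' h' h (hh ▸ (hcf a h).2)
        have c2 : cf a ≠ bf b := fun hh => hmax a b hne h h' ((hh ▸ (hcf a h).1).symm)
        have c3 : cf b ≠ af a := fun hh => hmax a b hne h h' (hh ▸ (hcf b h').2)
        have c4 : cf b ≠ bf a := fun hh => hmax b a hne' h' h ((hh ▸ (hcf b h').1).symm)
        have c1' := c1.symm; have c2' := c2.symm; have c3' := c3.symm; have c4' := c4.symm
        simp only [List.disjoint_cons_left, List.disjoint_cons_right, List.mem_cons,
          List.not_mem_nil, or_false, List.disjoint_nil_left, List.mem_singleton, Sym2.eq_iff]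
        tauto
  set e : (Fin t ⊕ (Fin k ⊕ Fin m)) ≃ Fin n :=
    (Equiv.sumCongr (Equiv.refl _) finSumFinEquiv).trans
      ((finSumFinEquiv).trans (finCongr hkm)) with he
  refine ⟨fun i => (Sum.elim F1 (Sum.elim F2 F3)) (e.symm i), fun i => hgood _, ?_⟩
  intro i j hij
  have hne : e.symm i ≠ e.symm j := fun h => hij (by simpa using congrArg e h)
  exact hdisj _ _ hne

private theorem abstract_conn {V : Type*} [Fintype V] [Nontrivial V] (G : SimpleGraph V)
    (hcn : ∀ a b : V, a ≠ b → ∃ c, G.Adj c a ∧ G.Adj c b) :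
    edgeConn G = minDegree' G := by
  classical
  have hSne : {d | ∃ v : V, d = Nat.card (G.neighborSet v)}.Nonempty := by
    obtain ⟨v⟩ := (inferInstance : Nonempty V)
    exact ⟨_, v, rfl⟩
  obtain ⟨v0, hv0⟩ := Nat.sInf_mem hSne
  have hδle : ∀ u : V, minDegree' G ≤ Nat.card (G.neighborSet u) := fun u =>
    Nat.sInf_le ⟨u, rfl⟩
  -- the incidence set of v0 disconnects
  have hdisc : ¬ (G.deleteEdges (G.incidenceSet v0)).Connected := by
    intro hconn
    obtain ⟨u, hu⟩ := exists_ne v0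
    obtain ⟨wlk⟩ := hconn.preconnected v0 u
    cases wlk with
    | nil => exact hu rfl
    | cons h p =>
      rw [SimpleGraph.deleteEdges_adj] at h
      exact h.2 ((G.mk'_mem_incidenceSet_left_iff).2 h.1)
  have hmem : minDegree' G ∈ {k | ∃ F : Set (Sym2 V), F ⊆ G.edgeSet ∧ Nat.card F = k ∧
      ¬ (G.deleteEdges F).Connected} := by
    refine ⟨G.incidenceSet v0, G.incidenceSet_subset v0, ?_, hdisc⟩
    rw [Nat.card_congr (G.incidenceSetEquivNeighborSet v0)]
    exact hv0.symm
  have hTne : {k | ∃ F : Set (Sym2 V), F ⊆ G.edgeSet ∧ Nat.card F = k ∧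
      ¬ (G.deleteEdges F).Connected}.Nonempty := ⟨_, hmem⟩
  refine le_antisymm (Nat.sInf_le hmem) (le_csInf hTne ?_)
  rintro j ⟨F, hFsub, hFcard, hFdisc⟩
  by_contra hlt
  push_neg at hlt
  apply hFdisc
  rw [SimpleGraph.connected_iff]
  refine ⟨fun u u' => ?_, ⟨v0⟩⟩
  by_cases huu : u = u'
  · subst huu; exact SimpleGraph.Reachable.refl u
  · obtain ⟨f, hf1, hf2⟩ := abstract_paths G hcn u u' huu
    have hδN : minDegree' G ≤ min (Nat.card (G.neighborSet u)) (Nat.card (G.neighborSet u')) :=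
      le_min (hδle u) (hδle u')
    by_cases hex : ∃ i, ∀ e ∈ (f i).edges, e ∉ F
    · obtain ⟨i, hi⟩ := hex
      exact ((f i).toDeleteEdges F hi).reachable
    · exfalso
      push_neg at hex
      choose g hg1 hg2 using hex
      have hginj : Function.Injective fun i => (⟨g i, hg2 i⟩ : F) := by
        intro i j hgij
        by_contra hne
        have hval : g i = g j := by simpa using congrArg Subtype.val hgij
        exact hf2 i j hne (hg1 i) (hval ▸ hg1 j)
      have hcards := Nat.card_le_card_of_injective _ hginj
      rw [Nat.card_eq_fintype_card, Fintype.card_fin] at hcards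
      have h2 : min (Nat.card (G.neighborSet u)) (Nat.card (G.neighborSet u')) ≤ j := by
        rw [← hFcard]; exact hcards
      omega

private lemma vis_cn (P : Finset (ℝ × ℝ)) (hP : ¬ Collinear ℝ (P : Set (ℝ × ℝ))) :
    ∀ a b : {p : ℝ × ℝ // p ∈ P}, a ≠ b →
      ∃ c, (visibilityGraph P).Adj c a ∧ (visibilityGraph P).Adj c b := by
  intro a b hab
  obtain ⟨c, hcP, h1, h2⟩ := common_neighbor hP a.2 b.2 (fun h => hab (Subtype.ext h))
  exact ⟨⟨c, hcP⟩, h1, h2⟩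

theorem visibility_edgeConnectivity_eq_minDegree
    (P : Finset (ℝ × ℝ)) (hP : ¬ Collinear ℝ (P : Set (ℝ × ℝ))) :
    edgeConn (visibilityGraph P) = minDegree' (visibilityGraph P) ∧
    ∀ v w : {p : ℝ × ℝ // p ∈ P}, v ≠ w →
      ∃ f : Fin (min (Nat.card ((visibilityGraph P).neighborSet v))
                     (Nat.card ((visibilityGraph P).neighborSet w))) →
              (visibilityGraph P).Walk v w,
        (∀ i, (f i).IsPath ∧ (f i).length ≤ 4) ∧
        ∀ i j, i ≠ j → List.Disjoint (f i).edges (f j).edges := by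
  have hsub : ¬ (P : Set (ℝ × ℝ)).Subsingleton := by
    intro h
    rcases h.eq_empty_or_singleton with he | ⟨x, he⟩
    · apply hP; rw [he]; exact collinear_empty ℝ _
    · apply hP; rw [he]; exact collinear_singleton ℝ x
  rw [Set.not_subsingleton_iff] at hsub
  obtain ⟨a, haP, b, hbP, hab⟩ := hsub
  have : Nontrivial {p : ℝ × ℝ // p ∈ P} :=
    ⟨⟨⟨a, haP⟩, ⟨b, hbP⟩, fun h => hab (congrArg Subtype.val h)⟩⟩
  exact ⟨abstract_conn _ (vis_cn P hP), fun v w hvw => abstract_paths _ (vis_cn P hP) v w hvw⟩
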